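/- For every c ∈ ℝ there exist ε > 0 and a function u that is real-analytic on (−ε, ε), with u(0) = c and u'(0) = 0, which satisfies the example equation for all x ∈ (0, ε); moreover its Taylor coefficients a_k = u^{(k)}(0)/k! satisfy a_0 = c, a_1 = 0 and, for all k ≥ 0, a_{k+2} = [(k(k−1−β) + γ)·a_k − δ·c_k] / ((k+2)(k+1+α)), where c_k denotes the k-th Taylor coefficient of the function u^p at 0. -/

import Mathlib

set_option autoImplicit false

open Real Set

namespace ExampleEq

noncomputable def conv (f g : ℕ → ℝ) (k : ℕ) : ℝ :=
  ∑ ij ∈ Finset.HasAntidiagonal.antidiagonal k, f ij.1 * g ij.2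

noncomputable def cpow (f : ℕ → ℝ) : ℕ → ℕ → ℝ
  | 0 => fun k => if k = 0 then 1 else 0
  | (m+1) => conv (cpow f m) f

lemma cpow_congr {f g : ℕ → ℝ} (m : ℕ) : ∀ k : ℕ, (∀ j ≤ k, f j = g j) →
    cpow f m k = cpow g m k := by
  induction m with
  | zero => intro k _; rfl
  | succ m ih =>
    intro k h
    simp only [cpow, conv]
    refine Finset.sum_congr rfl fun ij hij => ?_
    have hmem := Finset.HasAntidiagonal.mem_antidiagonal.mp hij
    rw [ih ij.1 (fun j hj => h j (by omega)), h ij.2 (by omega)]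

lemma cpow_one (f : ℕ → ℝ) (k : ℕ) : cpow f 1 k = f k := by
  simp only [cpow, conv]
  rw [Finset.sum_eq_single_of_mem (0, k) (by simp)]
  · simp
  · rintro ⟨i, j⟩ hmem hne
    have : i ≠ 0 := by
      intro h; apply hne
      have := Finset.HasAntidiagonal.mem_antidiagonal.mp hmem
      simp [h] at this ⊢; omega
    simp [this]

noncomputable def w (k : ℕ) : ℝ := (((k : ℝ) + 1) ^ 2)⁻¹

lemma w_pos (k : ℕ) : 0 < w k := by unfold w; positivity

lemma w_le_one (k : ℕ) : w k ≤ 1 := by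
  unfold w
  rw [inv_le_one_iff₀]
  right
  nlinarith [Nat.cast_nonneg (α := ℝ) k]

lemma sum_w_le (k : ℕ) : ∑ i ∈ Finset.range (k + 1), w i ≤ 2 := by
  have H : ∀ k : ℕ, ∑ i ∈ Finset.range (k + 1), w i ≤ 2 - ((k : ℝ) + 1)⁻¹ := by
    intro k
    induction k with
    | zero => simp [w]; norm_num
    | succ k ih =>
      rw [Finset.sum_range_succ]
      have h1 : w (k + 1) ≤ ((k : ℝ) + 1)⁻¹ - ((k : ℝ) + 2)⁻¹ := by
        have e : ((k:ℝ)+1)⁻¹ - ((k:ℝ)+2)⁻¹ = (((k:ℝ)+1) * ((k:ℝ)+2))⁻¹ := by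
          rw [inv_sub_inv (by positivity) (by positivity),
            show ((k:ℝ)+2 - ((k:ℝ)+1)) = 1 by ring, one_div]
        rw [e]
        unfold w
        apply inv_anti₀ (by positivity)
        push_cast
        nlinarith [Nat.cast_nonneg (α := ℝ) k]
      push_cast at h1 ⊢
      ring_nf at h1 ih ⊢
      linarith
  have h2 : (0:ℝ) < ((k : ℝ) + 1)⁻¹ := by positivity
  linarith [H k]

lemma conv_w_le (k : ℕ) :
    ∑ ij ∈ Finset.HasAntidiagonal.antidiagonal k, w ij.1 * w ij.2 ≤ 16 * w k := by
  have step : ∀ ij ∈ Finset.HasAntidiagonal.antidiagonal k, w ij.1 * w ij.2 ≤ 4 * w k * (w ij.1 + w ij.2) := by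
    rintro ⟨i, j⟩ hmem
    have hij : i + j = k := Finset.HasAntidiagonal.mem_antidiagonal.mp hmem
    have key : ((k : ℝ) + 1) ^ 2 ≤ 4 * (((i : ℝ) + 1) ^ 2 + ((j : ℝ) + 1) ^ 2) := by
      have hle : (k : ℝ) + 1 ≤ ((i : ℝ) + 1) + ((j : ℝ) + 1) := by
        have : ((i : ℝ) + (j : ℝ)) = (k : ℝ) := by exact_mod_cast congrArg (Nat.cast : ℕ → ℝ) hij
        linarith
      nlinarith [sq_nonneg (((i:ℝ)+1) - ((j:ℝ)+1)), Nat.cast_nonneg (α := ℝ) i,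
        Nat.cast_nonneg (α := ℝ) j, Nat.cast_nonneg (α := ℝ) k]
    have hAne : (((i:ℝ)+1)^2) ≠ 0 := by positivity
    have hBne : (((j:ℝ)+1)^2) ≠ 0 := by positivity
    have hKne : (((k:ℝ)+1)^2) ≠ 0 := by positivity
    have e : 4 * w k * (w i + w j) - w i * w j
        = (4*(((i:ℝ)+1)^2 + ((j:ℝ)+1)^2) - ((k:ℝ)+1)^2) * (w i * (w j * w k)) := by
      unfold w
      field_simp
      ring
    have hpos : 0 ≤ 4 * w k * (w i + w j) - w i * w j := by
      rw [e]
      exact mul_nonneg (by linarith) (mul_nonneg (w_pos i).le (mul_nonneg (w_pos j).le (w_pos k).le))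
    simp only []
    linarith
  calc ∑ ij ∈ Finset.HasAntidiagonal.antidiagonal k, w ij.1 * w ij.2
      ≤ ∑ ij ∈ Finset.HasAntidiagonal.antidiagonal k, 4 * w k * (w ij.1 + w ij.2) :=
        Finset.sum_le_sum step
    _ = 4 * w k * ∑ ij ∈ Finset.HasAntidiagonal.antidiagonal k, (w ij.1 + w ij.2) := by
        rw [Finset.mul_sum]
    _ ≤ 4 * w k * 4 := by
        have h1 : ∑ ij ∈ Finset.HasAntidiagonal.antidiagonal k, (w ij.1 + w ij.2)
            = (∑ ij ∈ Finset.HasAntidiagonal.antidiagonal k, w ij.1)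
              + ∑ ij ∈ Finset.HasAntidiagonal.antidiagonal k, w ij.2 := Finset.sum_add_distrib
        have h2 : ∑ ij ∈ Finset.HasAntidiagonal.antidiagonal k, w ij.1 = ∑ i ∈ Finset.range (k+1), w i := by
          rw [Finset.Nat.sum_antidiagonal_eq_sum_range_succ_mk]
        have h3 : ∑ ij ∈ Finset.HasAntidiagonal.antidiagonal k, w ij.2 = ∑ i ∈ Finset.range (k+1), w i := by
          rw [Finset.Nat.sum_antidiagonal_eq_sum_range_succ_mk]
          rw [← Finset.sum_range_reflect]
          refine Finset.sum_congr rfl fun i hi => ?_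
          have hik := Finset.mem_range.mp hi
          congr 1
          omega
        have := sum_w_le k
        have hw := (w_pos k).le
        nlinarith
    _ = 16 * w k := by ring

lemma cpow_bound {f : ℕ → ℝ} {M R : ℝ} (hM : 0 ≤ M) (hR : 0 ≤ R) (m : ℕ) :
    ∀ k : ℕ, (∀ j ≤ k, |f j| ≤ M * R ^ j * w j) →
      |cpow f (m+1) k| ≤ 16 ^ m * M ^ (m+1) * R ^ k * w k := by
  induction m with
  | zero =>
    intro k hf
    rw [cpow_one]
    simpa using hf k le_rfl
  | succ m ih =>
    intro k hf
    show |conv (cpow f (m+1)) f k| ≤ _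
    unfold conv
    calc |∑ ij ∈ Finset.HasAntidiagonal.antidiagonal k, cpow f (m+1) ij.1 * f ij.2|
        ≤ ∑ ij ∈ Finset.HasAntidiagonal.antidiagonal k, |cpow f (m+1) ij.1 * f ij.2| :=
          Finset.abs_sum_le_sum_abs _ _
      _ ≤ ∑ ij ∈ Finset.HasAntidiagonal.antidiagonal k,
            (16 ^ m * M ^ (m+1) * M) * R ^ k * (w ij.1 * w ij.2) := by
          refine Finset.sum_le_sum ?_
          rintro ⟨i, j⟩ hmem
          have hij : i + j = k := Finset.HasAntidiagonal.mem_antidiagonal.mp hmem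
          have h1 : |cpow f (m+1) i| ≤ 16 ^ m * M ^ (m+1) * R ^ i * w i :=
            ih i (fun l hl => hf l (by omega))
          have h2 : |f j| ≤ M * R ^ j * w j := hf j (by omega)
          have habs : |cpow f (m+1) i * f j| = |cpow f (m+1) i| * |f j| := abs_mul _ _
          rw [habs]
          have hnn1 : (0:ℝ) ≤ |cpow f (m+1) i| := abs_nonneg _
          have hnn2 : (0:ℝ) ≤ |f j| := abs_nonneg _
          calc |cpow f (m+1) i| * |f j|
              ≤ (16 ^ m * M ^ (m+1) * R ^ i * w i) * (M * R ^ j * w j) :=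
                mul_le_mul h1 h2 hnn2 (mul_nonneg (by positivity) (w_pos i).le)
            _ = (16 ^ m * M ^ (m+1) * M) * (R ^ i * R ^ j) * (w i * w j) := by ring
            _ = (16 ^ m * M ^ (m+1) * M) * R ^ k * (w i * w j) := by
                rw [← pow_add, hij]
      _ = (16 ^ m * M ^ (m+1) * M) * R ^ k
            * ∑ ij ∈ Finset.HasAntidiagonal.antidiagonal k, (w ij.1 * w ij.2) := by
          rw [← Finset.mul_sum]
      _ ≤ (16 ^ m * M ^ (m+1) * M) * R ^ k * (16 * w k) := by
          have := conv_w_le k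
          have hc : (0:ℝ) ≤ (16 ^ m * M ^ (m+1) * M) * R ^ k := by positivity
          exact mul_le_mul_of_nonneg_left this hc
      _ = 16 ^ (m+1) * M ^ (m+2) * R ^ k * w k := by ring

noncomputable def aseq (q : ℕ) (α β γ δ c : ℝ) : ℕ → ℝ
  | 0 => c
  | 1 => 0
  | (k+2) =>
      (((k:ℝ) * ((k:ℝ) - 1 - β) + γ) * aseq q α β γ δ c k
        - δ * cpow (fun j => if _h : j < k + 2 then aseq q α β γ δ c j else 0) q k)
        / (((k:ℝ) + 2) * ((k:ℝ) + 1 + α))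

lemma aseq_rec (q : ℕ) (α β γ δ c : ℝ) (k : ℕ) :
    aseq q α β γ δ c (k+2)
      = (((k:ℝ) * ((k:ℝ) - 1 - β) + γ) * aseq q α β γ δ c k
          - δ * cpow (aseq q α β γ δ c) q k)
        / (((k:ℝ) + 2) * ((k:ℝ) + 1 + α)) := by
  rw [aseq]
  congr 3
  apply cpow_congr
  intro j hj
  rw [dif_pos (by omega)]

noncomputable def Mc (c : ℝ) : ℝ := |c| + 1
noncomputable def Bc (m : ℕ) (β γ δ c : ℝ) : ℝ :=
  (1 + |β| + |γ|) + |δ| * 16 ^ m * (Mc c) ^ m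
noncomputable def Rc (m : ℕ) (β γ δ c : ℝ) : ℝ := 3 * Bc m β γ δ c

lemma Mc_nonneg (c : ℝ) : 0 ≤ Mc c := by unfold Mc; linarith [abs_nonneg c]
lemma Mc_ge_one (c : ℝ) : 1 ≤ Mc c := by unfold Mc; linarith [abs_nonneg c]
lemma Bc_ge_one (m : ℕ) (β γ δ c : ℝ) : 1 ≤ Bc m β γ δ c := by
  unfold Bc
  have h1 : (0:ℝ) ≤ |δ| * 16 ^ m * (Mc c) ^ m := by
    have := Mc_nonneg c
    positivity
  linarith [abs_nonneg β, abs_nonneg γ]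
lemma Rc_ge_one (m : ℕ) (β γ δ c : ℝ) : 1 ≤ Rc m β γ δ c := by
  have := Bc_ge_one m β γ δ c; unfold Rc; linarith

lemma aseq_bound (m : ℕ) (α β γ δ c : ℝ) (hα : 0 < α) :
    ∀ n : ℕ, |aseq (m+1) α β γ δ c n| ≤ Mc c * Rc m β γ δ c ^ n * w n := by
  set M := Mc c with hMdef
  set B := Bc m β γ δ c with hBdef
  set R := Rc m β γ δ c with hRdef
  have hM1 : 1 ≤ M := Mc_ge_one c
  have hB1 : 1 ≤ B := Bc_ge_one m β γ δ c
  have hR1 : 1 ≤ R := Rc_ge_one m β γ δ c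
  have hM0 : 0 ≤ M := by linarith
  have hB0 : 0 ≤ B := by linarith
  have hR0 : 0 ≤ R := by linarith
  set a := aseq (m+1) α β γ δ c with hadef
  intro n
  induction n using Nat.strong_induction_on with
  | _ n ih =>
  rcases n with _ | n
  · have : a 0 = c := by rw [hadef, aseq]
    rw [this]
    have hw0 : w 0 = 1 := by simp [w]
    rw [hw0, pow_zero]
    simp only [mul_one]
    unfold M
    unfold Mc
    linarith [abs_nonneg c]
  rcases n with _ | k
  · have : a 1 = 0 := by rw [hadef, aseq]
    rw [this, abs_zero]
    have := w_pos 1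
    positivity
  · -- main step
    have hrec := aseq_rec (m+1) α β γ δ c k
    rw [← hadef] at hrec
    have hk0 : (0:ℝ) ≤ (k:ℝ) := Nat.cast_nonneg k
    have hD : (0:ℝ) < ((k:ℝ) + 2) * ((k:ℝ) + 1 + α) := by nlinarith
    have hDge : ((k:ℝ)+1)^2 ≤ ((k:ℝ) + 2) * ((k:ℝ) + 1 + α) := by nlinarith
    have hC : |cpow a (m+1) k| ≤ 16 ^ m * M ^ (m+1) * R ^ k * w k := by
      apply cpow_bound hM0 hR0
      intro j hj
      exact ih j (by omega)
    have hak : |a k| ≤ M * R ^ k * w k := ih k (by omega)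
    have hK : |(k:ℝ) * ((k:ℝ) - 1 - β) + γ| ≤ (1 + |β| + |γ|) * ((k:ℝ)+1)^2 := by
      have h1 : |(k:ℝ) * ((k:ℝ) - 1 - β) + γ| ≤ (k:ℝ) * |(k:ℝ) - 1 - β| + |γ| := by
        calc |(k:ℝ) * ((k:ℝ) - 1 - β) + γ| ≤ |(k:ℝ) * ((k:ℝ) - 1 - β)| + |γ| := abs_add_le _ _
          _ = (k:ℝ) * |(k:ℝ) - 1 - β| + |γ| := by rw [abs_mul, abs_of_nonneg hk0]
      have h2 : |(k:ℝ) - 1 - β| ≤ (k:ℝ) + 1 + |β| := by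
        calc |(k:ℝ) - 1 - β| ≤ |(k:ℝ) - 1| + |β| := abs_sub _ _
          _ ≤ ((k:ℝ) + 1) + |β| := by
              have : |(k:ℝ) - 1| ≤ (k:ℝ) + 1 := by
                rw [abs_le]; constructor <;> linarith
              linarith
      have h3 := mul_le_mul_of_nonneg_left h2 hk0
      nlinarith [abs_nonneg β, abs_nonneg γ, h1, h3, sq_nonneg (k:ℝ)]
    -- numerator bound
    have hnum : |((k:ℝ) * ((k:ℝ) - 1 - β) + γ) * a k - δ * cpow a (m+1) k|
        ≤ B * ((k:ℝ)+1)^2 * (M * R ^ k * w k) := by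
      have t1 : |((k:ℝ) * ((k:ℝ) - 1 - β) + γ) * a k|
          ≤ ((1 + |β| + |γ|) * ((k:ℝ)+1)^2) * (M * R ^ k * w k) := by
        rw [abs_mul]
        apply mul_le_mul hK hak (abs_nonneg _)
        positivity
      have t2 : |δ * cpow a (m+1) k| ≤ (|δ| * 16 ^ m * M ^ m) * ((k:ℝ)+1)^2 * (M * R ^ k * w k) := by
        rw [abs_mul]
        have h16 : |δ| * (16 ^ m * M ^ (m+1) * R ^ k * w k)
            = (|δ| * 16 ^ m * M ^ m) * 1 * (M * R ^ k * w k) := by ring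
        calc |δ| * |cpow a (m+1) k| ≤ |δ| * (16 ^ m * M ^ (m+1) * R ^ k * w k) :=
              mul_le_mul_of_nonneg_left hC (abs_nonneg δ)
          _ = (|δ| * 16 ^ m * M ^ m) * 1 * (M * R ^ k * w k) := h16
          _ ≤ (|δ| * 16 ^ m * M ^ m) * ((k:ℝ)+1)^2 * (M * R ^ k * w k) := by
              have hone : (1:ℝ) ≤ ((k:ℝ)+1)^2 := by nlinarith
              have hMRw : (0:ℝ) ≤ M * R ^ k * w k := by
                have := (w_pos k).le; positivity
              have hX : (0:ℝ) ≤ |δ| * 16 ^ m * M ^ m := by positivity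
              exact mul_le_mul_of_nonneg_right
                (mul_le_mul_of_nonneg_left hone hX) hMRw
      calc |((k:ℝ) * ((k:ℝ) - 1 - β) + γ) * a k - δ * cpow a (m+1) k|
          ≤ |((k:ℝ) * ((k:ℝ) - 1 - β) + γ) * a k| + |δ * cpow a (m+1) k| := abs_sub _ _
        _ ≤ ((1 + |β| + |γ|) * ((k:ℝ)+1)^2) * (M * R ^ k * w k)
            + (|δ| * 16 ^ m * M ^ m) * ((k:ℝ)+1)^2 * (M * R ^ k * w k) := add_le_add t1 t2
        _ = B * ((k:ℝ)+1)^2 * (M * R ^ k * w k) := by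
            rw [hBdef]; unfold Bc; rw [← hMdef]; ring
    have habs : |a (k+2+ 0)| = |((k:ℝ) * ((k:ℝ) - 1 - β) + γ) * a k - δ * cpow a (m+1) k|
        / (((k:ℝ) + 2) * ((k:ℝ) + 1 + α)) := by
      simp only [Nat.add_zero]
      rw [hrec, abs_div, abs_of_pos hD]
    simp only [Nat.add_zero] at habs
    rw [habs]
    have step1 : |((k:ℝ) * ((k:ℝ) - 1 - β) + γ) * a k - δ * cpow a (m+1) k|
        / (((k:ℝ) + 2) * ((k:ℝ) + 1 + α))
        ≤ (B * ((k:ℝ)+1)^2 * (M * R ^ k * w k)) / (((k:ℝ)+1)^2) := by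
      have hnn : (0:ℝ) ≤ B * ((k:ℝ)+1)^2 * (M * R ^ k * w k) := by
        have := (w_pos k).le; positivity
      exact div_le_div₀ hnn hnum (by positivity) hDge
    have step2 : (B * ((k:ℝ)+1)^2 * (M * R ^ k * w k)) / (((k:ℝ)+1)^2)
        = B * (M * R ^ k * w k) := by
      field_simp
    have step3 : B * (M * R ^ k * w k) ≤ M * R ^ (k+2) * w (k+2) := by
      have hwk : w k = (((k:ℝ)+1)^2)⁻¹ := rfl
      have hwk2 : w (k+2) = (((k:ℝ)+3)^2)⁻¹ := by
        unfold w
        push_cast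
        ring_nf
      have key : B * (((k:ℝ)+3)^2) ≤ R^2 * ((k:ℝ)+1)^2 := by
        have hR3 : R = 3 * B := by rw [hRdef, hBdef]; rfl
        rw [hR3]
        nlinarith [mul_nonneg (sub_nonneg.mpr hB1) (mul_nonneg hB0 (sq_nonneg ((k:ℝ)+1))),
          mul_nonneg hB0 hk0, mul_nonneg (mul_nonneg hB0 hk0) hk0]
      have h1p : (0:ℝ) < ((k:ℝ)+1)^2 := by positivity
      have h3p : (0:ℝ) < ((k:ℝ)+3)^2 := by positivity
      have hBw : B * w k ≤ R^2 * w (k+2) := by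
        rw [hwk, hwk2, ← one_div, ← one_div, mul_one_div, mul_one_div,
          div_le_div_iff₀ h1p h3p]
        exact key
      calc B * (M * R ^ k * w k) = M * R ^ k * (B * w k) := by ring
        _ ≤ M * R ^ k * (R^2 * w (k+2)) := by
            apply mul_le_mul_of_nonneg_left hBw (by positivity)
        _ = M * R ^ (k+2) * w (k+2) := by ring
    linarith [step1, step2.le, step3, step2.ge]

lemma iteratedDeriv_of_series {f : ℝ → ℝ} {b : ℕ → ℝ} {r : ENNReal}
    (h : HasFPowerSeriesOnBall f (FormalMultilinearSeries.ofScalars ℝ b) 0 r) (n : ℕ) :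
    iteratedDeriv n f 0 = (n.factorial : ℝ) * b n := by
  have key := h.factorial_smul (1 : ℝ) n
  rw [FormalMultilinearSeries.ofScalars_apply_eq] at key
  rw [iteratedDeriv_eq_iteratedFDeriv, ← key]
  simp [nsmul_eq_mul]

lemma hasSum_shift {f : ℕ → ℝ} {T : ℝ} (j : ℕ)
    (h : HasSum (fun n => f (n + j)) T) (h0 : ∀ i < j, f i = 0) : HasSum f T := by
  have := (hasSum_nat_add_iff (f := f) j).mp h
  have hz : ∑ i ∈ Finset.range j, f i = 0 :=
    Finset.sum_eq_zero fun i hi => h0 i (Finset.mem_range.mp hi)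
  rwa [hz, add_zero] at this

lemma hasSum_cpow {f : ℕ → ℝ} {y s : ℝ}
    (hnorm : Summable fun n => ‖f n * y ^ n‖)
    (hsum : HasSum (fun n => f n * y ^ n) s) (m : ℕ) :
    HasSum (fun n => cpow f (m+1) n * y ^ n) (s ^ (m+1)) := by
  have main : ∀ m : ℕ, Summable (fun n => ‖cpow f (m+1) n * y ^ n‖) ∧
      (∑' n, cpow f (m+1) n * y ^ n) = s ^ (m+1) := by
    intro m
    induction m with
    | zero =>
      simp only [Nat.zero_add]
      have he : ∀ n, cpow f 1 n * y ^ n = f n * y ^ n := by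
        intro n; rw [cpow_one]
      simp only [he]
      exact ⟨hnorm, by rw [hsum.tsum_eq, pow_one]⟩
    | succ m ih =>
      obtain ⟨ihs, iht⟩ := ih
      have key : ∀ n, (∑ kl ∈ Finset.HasAntidiagonal.antidiagonal n,
            (cpow f (m+1) kl.1 * y ^ kl.1) * (f kl.2 * y ^ kl.2))
          = cpow f (m+1+1) n * y ^ n := by
        intro n
        show _ = conv (cpow f (m+1)) f n * y ^ n
        unfold conv
        rw [Finset.sum_mul]
        refine Finset.sum_congr rfl fun kl hkl => ?_
        have hmem : kl.1 + kl.2 = n := Finset.HasAntidiagonal.mem_antidiagonal.mp hkl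
        rw [← hmem, pow_add]
        ring
      constructor
      · have := summable_norm_sum_mul_antidiagonal_of_summable_norm ihs hnorm
        simpa only [key] using this
      · have := tsum_mul_tsum_eq_tsum_sum_antidiagonal_of_summable_norm ihs hnorm
        simp only [key] at this
        rw [← this, iht, hsum.tsum_eq, ← pow_succ]
  obtain ⟨hs, ht⟩ := main m
  have hsummable : Summable (fun n => cpow f (m+1) n * y ^ n) := by
    refine Summable.of_norm hs
  rw [← ht]
  exact hsummable.hasSum

end ExampleEq

open ExampleEq FormalMultilinearSeries

set_option maxHeartbeats 1000000

/-- Local analytic solution of the example equation at `x = 0` with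
`u(0) = c`, `u'(0) = 0`, whose Taylor coefficients `a_k = u^{(k)}(0)/k!` satisfy the
recurrence `a_{k+2} = [(k(k-1-β)+γ)a_k - δ c_k] / ((k+2)(k+1+α))`, where `c_k` are the
Taylor coefficients of `u^p` at `0`. -/
theorem exampleEquation_local_analytic_solution_at_zero
    (p : ℕ) (hp : 1 < p) (α β γ δ : ℝ) (hα : 0 < α) (hδ : δ ≠ 0) :
    ∀ c : ℝ, ∃ ε > (0 : ℝ), ∃ u : ℝ → ℝ,
      AnalyticOnNhd ℝ u (Ioo (-ε) ε) ∧ u 0 = c ∧ deriv u 0 = 0 ∧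
      (∀ x ∈ Ioo (0 : ℝ) ε,
        (1 - x ^ 2) * deriv (deriv u) x + (α / x + β * x) * deriv u x
          - γ * u x + δ * u x ^ p = 0) ∧
      iteratedDeriv 0 u 0 / (Nat.factorial 0 : ℝ) = c ∧
      iteratedDeriv 1 u 0 / (Nat.factorial 1 : ℝ) = 0 ∧
      ∀ k : ℕ,
        iteratedDeriv (k + 2) u 0 / (Nat.factorial (k + 2) : ℝ)
          = (((k : ℝ) * ((k : ℝ) - 1 - β) + γ)
                * (iteratedDeriv k u 0 / (Nat.factorial k : ℝ))
              - δ * (iteratedDeriv k (fun x => u x ^ p) 0 / (Nat.factorial k : ℝ)))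
            / (((k : ℝ) + 2) * ((k : ℝ) + 1 + α)) := by
  intro c
  obtain ⟨m, rfl⟩ : ∃ m, p = m + 1 := ⟨p - 1, by omega⟩
  set a : ℕ → ℝ := aseq (m+1) α β γ δ c with ha
  set cc : ℕ → ℝ := cpow a (m+1) with hcc
  set M : ℝ := Mc c with hM
  set R : ℝ := Rc m β γ δ c with hR
  have hM1 : 1 ≤ M := Mc_ge_one c
  have hR1 : 1 ≤ R := Rc_ge_one m β γ δ c
  have hM0 : (0:ℝ) ≤ M := by linarith
  have hR0 : (0:ℝ) < R := by linarith
  have hbound : ∀ n, |a n| ≤ M * R ^ n * w n := aseq_bound m α β γ δ c hα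
  have ha0 : a 0 = c := by rw [ha, aseq]
  have ha1 : a 1 = 0 := by rw [ha, aseq]
  have arec : ∀ k : ℕ, (((k:ℝ)+2)*((k:ℝ)+1+α)) * a (k+2)
      = ((k:ℝ)*((k:ℝ)-1-β)+γ) * a k - δ * cc k := by
    intro k
    have hk0 : (0:ℝ) ≤ (k:ℝ) := Nat.cast_nonneg k
    have hden : (((k:ℝ)+2)*((k:ℝ)+1+α)) ≠ 0 := by positivity
    rw [ha, aseq_rec, ← ha, ← hcc]
    field_simp
  -- the radius
  set ε : ℝ := R⁻¹ with hε
  have εpos : 0 < ε := by rw [hε]; positivity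
  set εn : NNReal := ε.toNNReal with hεn
  have hεnc : (εn : ℝ) = ε := Real.coe_toNNReal _ εpos.le
  have hcoe : (εn : ENNReal) = ENNReal.ofReal ε := by
    rw [← hεnc, ENNReal.ofReal_coe_nnreal]
  have hεnpos : (0:ENNReal) < (εn : ENNReal) := by
    rw [ENNReal.coe_pos]
    exact Real.toNNReal_pos.mpr εpos
  have hRε : R * ε = 1 := by rw [hε]; field_simp
  -- power series for u
  set Sa : FormalMultilinearSeries ℝ ℝ ℝ := ofScalars ℝ a with hSa
  have hrad : (εn : ENNReal) ≤ Sa.radius := by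
    apply Sa.le_radius_of_bound M
    intro n
    rw [hSa, ofScalars_norm, Real.norm_eq_abs, hεnc]
    calc |a n| * ε ^ n ≤ (M * R ^ n * w n) * ε ^ n := by
          apply mul_le_mul_of_nonneg_right (hbound n) (by positivity)
      _ = M * w n * (R * ε) ^ n := by rw [mul_pow]; ring
      _ = M * w n := by rw [hRε, one_pow, mul_one]
      _ ≤ M * 1 := mul_le_mul_of_nonneg_left (w_le_one n) hM0
      _ = M := mul_one M
  set u : ℝ → ℝ := Sa.sum with hu
  have hball : HasFPowerSeriesOnBall u Sa 0 (εn : ENNReal) :=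
    (Sa.hasFPowerSeriesOnBall (lt_of_lt_of_le hεnpos hrad)).mono hεnpos hrad
  -- membership helpers
  have hmem : ∀ y : ℝ, |y| < ε → y ∈ Metric.eball (0:ℝ) (εn : ENNReal) := by
    intro y hy
    rw [EMetric.mem_ball, edist_dist, dist_zero_right, Real.norm_eq_abs, hcoe]
    exact (ENNReal.ofReal_lt_ofReal_iff εpos).mpr hy
  have hSaeval : ∀ (y : ℝ) (n : ℕ), Sa n (fun _ => y) = a n * y ^ n := by
    intro y n
    rw [hSa, ofScalars_apply_eq, smul_eq_mul]
  have hsum_u : ∀ y : ℝ, |y| < ε → HasSum (fun n => a n * y ^ n) (u y) := by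
    intro y hy
    have h := hball.hasSum (hmem y hy)
    simp only [hSaeval, zero_add] at h
    exact h
  have hnorm_u : ∀ y : ℝ, |y| < ε → Summable (fun n => ‖a n * y ^ n‖) := by
    intro y hy
    have hq0 : (0:ℝ) ≤ R * |y| := by positivity
    have hq1 : R * |y| < 1 := by
      calc R * |y| < R * ε := mul_lt_mul_of_pos_left hy hR0
        _ = 1 := hRε
    refine Summable.of_nonneg_of_le (fun n => norm_nonneg _) (fun n => ?_)
      ((summable_geometric_of_lt_one hq0 hq1).mul_left M)
    rw [Real.norm_eq_abs, abs_mul, abs_pow]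
    calc |a n| * |y| ^ n ≤ (M * R ^ n * w n) * |y| ^ n := by
          apply mul_le_mul_of_nonneg_right (hbound n) (by positivity)
      _ = M * w n * (R * |y|) ^ n := by rw [mul_pow]; ring
      _ ≤ M * 1 * (R * |y|) ^ n := by
          apply mul_le_mul_of_nonneg_right _ (by positivity)
          exact mul_le_mul_of_nonneg_left (w_le_one n) hM0
      _ = M * (R * |y|) ^ n := by rw [mul_one]
  -- power series for u ^ (m+1)
  set Sc : FormalMultilinearSeries ℝ ℝ ℝ := ofScalars ℝ cc with hSc
  have hSceval : ∀ (y : ℝ) (n : ℕ), Sc n (fun _ => y) = cc n * y ^ n := by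
    intro y n
    rw [hSc, ofScalars_apply_eq, smul_eq_mul]
  have hccbound : ∀ n, |cc n| ≤ 16 ^ m * M ^ (m+1) * R ^ n * w n := by
    intro n
    rw [hcc]
    exact cpow_bound hM0 hR0.le m n (fun j _ => hbound j)
  have hcrad : (εn : ENNReal) ≤ Sc.radius := by
    apply Sc.le_radius_of_bound (16 ^ m * M ^ (m+1))
    intro n
    rw [hSc, ofScalars_norm, Real.norm_eq_abs, hεnc]
    calc |cc n| * ε ^ n ≤ (16 ^ m * M ^ (m+1) * R ^ n * w n) * ε ^ n := by
          apply mul_le_mul_of_nonneg_right (hccbound n) (by positivity)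
      _ = 16 ^ m * M ^ (m+1) * w n * (R * ε) ^ n := by rw [mul_pow]; ring
      _ = 16 ^ m * M ^ (m+1) * w n := by rw [hRε, one_pow, mul_one]
      _ ≤ 16 ^ m * M ^ (m+1) * 1 := by
          apply mul_le_mul_of_nonneg_left (w_le_one n) (by positivity)
      _ = 16 ^ m * M ^ (m+1) := mul_one _
  have hupsum : ∀ y : ℝ, |y| < ε →
      HasSum (fun n => cc n * y ^ n) (u y ^ (m+1)) := by
    intro y hy
    rw [hcc]
    exact hasSum_cpow (hnorm_u y hy) (hsum_u y hy) m
  have hupball : HasFPowerSeriesOnBall (fun x => u x ^ (m+1)) Sc 0 (εn : ENNReal) := by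
    refine ⟨hcrad, hεnpos, ?_⟩
    intro y hy
    have hy' : |y| < ε := by
      rw [EMetric.mem_ball, edist_dist, dist_zero_right, Real.norm_eq_abs, hcoe] at hy
      exact (ENNReal.ofReal_lt_ofReal_iff εpos).mp hy
    have h := hupsum y hy'
    simp only [hSceval, zero_add]
    exact h
  -- iterated derivatives
  have hIDu : ∀ n, iteratedDeriv n u 0 = (n.factorial : ℝ) * a n := by
    have hball' := hball
    rw [hSa] at hball'
    exact fun n => iteratedDeriv_of_series hball' n
  have hIDup : ∀ n, iteratedDeriv n (fun x => u x ^ (m+1)) 0 = (n.factorial : ℝ) * cc n := by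
    have hupball' := hupball
    rw [hSc] at hupball'
    exact fun n => iteratedDeriv_of_series hupball' n
  refine ⟨ε, εpos, u, ?_, ?_, ?_, ?_, ?_, ?_, ?_⟩
  · -- analytic
    apply hball.analyticOnNhd.mono
    intro y hy
    exact hmem y (abs_lt.mpr ⟨hy.1, hy.2⟩)
  · -- u 0 = c
    have h := hIDu 0
    rw [iteratedDeriv_zero] at h
    simpa [ha0] using h
  · -- deriv u 0 = 0
    have h := hIDu 1
    rw [iteratedDeriv_one] at h
    simpa [ha1] using h
  · -- ODE
    intro x hx
    obtain ⟨hx1, hx2⟩ := hx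
    have hxa : |x| < ε := by rw [abs_of_pos hx1]; exact hx2
    have hxm := hmem x hxa
    have hxne : x ≠ 0 := ne_of_gt hx1
    have ev1 : ∀ {F : Type} [NormedAddCommGroup F] [NormedSpace ℝ F]
        (L : ℝ →L[ℝ] F) (t : ℝ), L t = t • L 1 := by
      intro F _ _ L t
      conv_lhs => rw [show t = t • (1:ℝ) by simp]
      rw [map_smul]
    have h0 := hsum_u x hxa
    have hup := hupsum x hxa
    -- first derivative series
    have hd1 : HasFPowerSeriesOnBall (fderiv ℝ u) Sa.derivSeries 0 (εn : ENNReal) :=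
      hball.fderiv
    have h1 : HasSum (fun n : ℕ => ((n:ℝ)+1) * a (n+1) * x ^ (n+1)) (x * deriv u x) := by
      have h1' := (hd1.hasSum hxm).mapL (ContinuousLinearMap.apply ℝ ℝ x)
      simp only [ContinuousLinearMap.apply_apply] at h1'
      have hterm : ∀ n : ℕ, Sa.derivSeries n (fun _ => x) x
          = ((n:ℝ)+1) * a (n+1) * x ^ (n+1) := by
        intro n
        rw [derivSeries_apply_diag, nsmul_eq_mul, hSaeval]
        push_cast
        ring
      have htgt : fderiv ℝ u (0 + x) x = x * deriv u x := by
        rw [zero_add, ev1 (fderiv ℝ u x) x, fderiv_apply_one_eq_deriv, smul_eq_mul]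
      rw [htgt] at h1'
      simp only [hterm] at h1'
      exact h1'
    -- second derivative series
    have hdiff1 : DifferentiableAt ℝ (fderiv ℝ u) x :=
      (hd1.analyticOnNhd x hxm).differentiableAt
    have hd2 : HasFPowerSeriesOnBall (𝕜 := ℝ) (fderiv ℝ (fderiv ℝ u))
        Sa.derivSeries.derivSeries 0 (εn : ENNReal) := hd1.fderiv
    have h2 : HasSum (fun n : ℕ => ((n:ℝ)+1) * ((n:ℝ)+2) * a (n+2) * x ^ (n+2))
        (x * (x * deriv (deriv u) x)) := by
      have h2' := ((hd2.hasSum hxm).mapL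
        (ContinuousLinearMap.apply ℝ (ℝ →L[ℝ] ℝ) x)).mapL (ContinuousLinearMap.apply ℝ ℝ x)
      simp only [ContinuousLinearMap.apply_apply] at h2'
      have hterm2 : ∀ n : ℕ, Sa.derivSeries.derivSeries n (fun _ => x) x x
          = ((n:ℝ)+1) * ((n:ℝ)+2) * a (n+2) * x ^ (n+2) := by
        intro n
        rw [derivSeries_apply_diag]
        rw [show ((n+1) • Sa.derivSeries (n+1) (fun _ => x) : ℝ →L[ℝ] ℝ) x
            = (n+1) • (Sa.derivSeries (n+1) (fun _ => x) x) from rfl]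
        rw [derivSeries_apply_diag, nsmul_eq_mul, nsmul_eq_mul, hSaeval]
        push_cast
        ring
      have e1 : deriv (deriv u) x = fderiv ℝ (fderiv ℝ u) x 1 1 := by
        rw [← fderiv_apply_one_eq_deriv]
        have hcomp : fderiv ℝ (deriv u) x
            = (ContinuousLinearMap.apply ℝ ℝ 1).comp (fderiv ℝ (fderiv ℝ u) x) := by
          have hdu : deriv u = fun z => (ContinuousLinearMap.apply ℝ ℝ 1) (fderiv ℝ u z) := by
            funext z
            simp only [ContinuousLinearMap.apply_apply]
            rw [fderiv_apply_one_eq_deriv]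
          rw [hdu]
          exact (((ContinuousLinearMap.apply ℝ ℝ 1).hasFDerivAt).comp x
            hdiff1.hasFDerivAt).fderiv
        rw [hcomp]
        simp only [ContinuousLinearMap.coe_comp', Function.comp_apply,
          ContinuousLinearMap.apply_apply]
      have htgt2 : fderiv ℝ (fderiv ℝ u) (0 + x) x x = x * (x * deriv (deriv u) x) := by
        rw [zero_add, ev1 (fderiv ℝ (fderiv ℝ u) x) x, ContinuousLinearMap.smul_apply,
          ev1 ((fderiv ℝ (fderiv ℝ u) x) 1) x, e1]
        simp only [smul_eq_mul]
      rw [htgt2] at h2'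
      simp only [hterm2] at h2'
      exact h2'
    -- shifted pieces
    have P1 : HasSum (fun q : ℕ => if 2 ≤ q then ((q:ℝ)-1)*(q:ℝ)*a q*x^q else 0)
        (x * (x * deriv (deriv u) x)) := by
      refine hasSum_shift 2 ?_ (by intro i hi; interval_cases i <;> norm_num)
      have he : ∀ n : ℕ, (if 2 ≤ n+2 then ((↑(n+2):ℝ)-1)*(↑(n+2):ℝ)*a (n+2)*x^(n+2) else 0)
          = ((n:ℝ)+1) * ((n:ℝ)+2) * a (n+2) * x ^ (n+2) := by
        intro n
        rw [if_pos (by omega)]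
        push_cast
        ring
      simpa only [he] using h2
    have P2 : HasSum (fun q : ℕ => if 4 ≤ q then -(((q:ℝ)-3)*((q:ℝ)-2)*a (q-2)*x^q) else 0)
        (-(x^2) * (x * (x * deriv (deriv u) x))) := by
      refine hasSum_shift 4 ?_ (by intro i hi; interval_cases i <;> norm_num)
      have he : ∀ n : ℕ, (if 4 ≤ n+4 then -(((↑(n+4):ℝ)-3)*((↑(n+4):ℝ)-2)*a (n+4-2)*x^(n+4)) else 0)
          = -(x^2) * (((n:ℝ)+1) * ((n:ℝ)+2) * a (n+2) * x ^ (n+2)) := by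
        intro n
        rw [if_pos (by omega), show n+4-2 = n+2 from rfl]
        push_cast
        ring
      simpa only [he] using h2.mul_left (-(x^2))
    have P3 : HasSum (fun q : ℕ => if 1 ≤ q then α*((q:ℝ)*a q*x^q) else 0)
        (α * (x * deriv u x)) := by
      refine hasSum_shift 1 ?_ (by intro i hi; interval_cases i <;> norm_num)
      have he : ∀ n : ℕ, (if 1 ≤ n+1 then α*((↑(n+1):ℝ)*a (n+1)*x^(n+1)) else 0)
          = α * (((n:ℝ)+1) * a (n+1) * x ^ (n+1)) := by
        intro n
        rw [if_pos (by omega)]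
        push_cast
        ring
      simpa only [he] using h1.mul_left α
    have P4 : HasSum (fun q : ℕ => if 3 ≤ q then β*(((q:ℝ)-2)*a (q-2)*x^q) else 0)
        (β*x^2 * (x * deriv u x)) := by
      refine hasSum_shift 3 ?_ (by intro i hi; interval_cases i <;> norm_num)
      have he : ∀ n : ℕ, (if 3 ≤ n+3 then β*(((↑(n+3):ℝ)-2)*a (n+3-2)*x^(n+3)) else 0)
          = β*x^2 * (((n:ℝ)+1) * a (n+1) * x ^ (n+1)) := by
        intro n
        rw [if_pos (by omega), show n+3-2 = n+1 from rfl]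
        push_cast
        ring
      simpa only [he] using h1.mul_left (β*x^2)
    have P5 : HasSum (fun q : ℕ => if 2 ≤ q then -(γ*x^2*(a (q-2)*x^(q-2))) else 0)
        (-(γ*x^2) * u x) := by
      refine hasSum_shift 2 ?_ (by intro i hi; interval_cases i <;> norm_num)
      have he : ∀ n : ℕ, (if 2 ≤ n+2 then -(γ*x^2*(a (n+2-2)*x^(n+2-2))) else 0)
          = -(γ*x^2) * (a n * x ^ n) := by
        intro n
        rw [if_pos (by omega), show n+2-2 = n from rfl]
        ring
      simpa only [he] using h0.mul_left (-(γ*x^2))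
    have P6 : HasSum (fun q : ℕ => if 2 ≤ q then δ*x^2*(cc (q-2)*x^(q-2)) else 0)
        (δ*x^2 * u x ^ (m+1)) := by
      refine hasSum_shift 2 ?_ (by intro i hi; interval_cases i <;> norm_num)
      have he : ∀ n : ℕ, (if 2 ≤ n+2 then δ*x^2*(cc (n+2-2)*x^(n+2-2)) else 0)
          = δ*x^2 * (cc n * x ^ n) := by
        intro n
        rw [if_pos (by omega), show n+2-2 = n from rfl]
      simpa only [he] using hup.mul_left (δ*x^2)
    have Ptot := ((((P1.add P2).add P3).add P4).add P5).add P6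
    have hzero : ∀ q : ℕ,
        ((((((if 2 ≤ q then ((q:ℝ)-1)*(q:ℝ)*a q*x^q else 0)
          + (if 4 ≤ q then -(((q:ℝ)-3)*((q:ℝ)-2)*a (q-2)*x^q) else 0))
          + (if 1 ≤ q then α*((q:ℝ)*a q*x^q) else 0))
          + (if 3 ≤ q then β*(((q:ℝ)-2)*a (q-2)*x^q) else 0))
          + (if 2 ≤ q then -(γ*x^2*(a (q-2)*x^(q-2))) else 0))
          + (if 2 ≤ q then δ*x^2*(cc (q-2)*x^(q-2)) else 0)) = 0 := by
      intro q
      match q with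
      | 0 => norm_num
      | 1 => norm_num [ha1]
      | 2 =>
        have hr := arec 0
        push_cast at hr
        norm_num at hr
        norm_num [ha1]
        linear_combination x^2 * hr
      | 3 =>
        have hr := arec 1
        push_cast at hr
        norm_num [ha1] at hr
        simp only [show (3:ℕ)-2 = 1 from rfl, ha1]
        norm_num
        linear_combination x^3 * hr
      | (k+4) =>
        have hr := arec (k+2)
        push_cast at hr
        rw [if_pos (by omega : 2 ≤ k+4), if_pos (by omega : 4 ≤ k+4),
          if_pos (by omega : 1 ≤ k+4), if_pos (by omega : 3 ≤ k+4),
          if_pos (by omega : 2 ≤ k+4), if_pos (by omega : 2 ≤ k+4)]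
        rw [show k+4-2 = k+2 from rfl]
        simp only [show k+2+2 = k+4 from rfl] at hr
        push_cast
        linear_combination x^(k+4) * hr
    have hfz : (fun q : ℕ =>
        ((((((if 2 ≤ q then ((q:ℝ)-1)*(q:ℝ)*a q*x^q else 0)
          + (if 4 ≤ q then -(((q:ℝ)-3)*((q:ℝ)-2)*a (q-2)*x^q) else 0))
          + (if 1 ≤ q then α*((q:ℝ)*a q*x^q) else 0))
          + (if 3 ≤ q then β*(((q:ℝ)-2)*a (q-2)*x^q) else 0))
          + (if 2 ≤ q then -(γ*x^2*(a (q-2)*x^(q-2))) else 0))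
          + (if 2 ≤ q then δ*x^2*(cc (q-2)*x^(q-2)) else 0)))
        = fun _ : ℕ => (0:ℝ) := funext hzero
    rw [hfz] at Ptot
    have Tzero : x * (x * deriv (deriv u) x) + -(x^2) * (x * (x * deriv (deriv u) x))
        + α * (x * deriv u x) + β*x^2 * (x * deriv u x) + -(γ*x^2) * u x
        + δ*x^2 * u x ^ (m+1) = 0 := (hasSum_zero.unique Ptot).symm
    have hdiv : α / x * x^2 = α * x := by field_simp
    have final : x^2 * ((1 - x ^ 2) * deriv (deriv u) x + (α / x + β * x) * deriv u x
        - γ * u x + δ * u x ^ (m + 1)) = 0 := by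
      linear_combination Tzero + deriv u x * hdiv
    rcases mul_eq_zero.mp final with h | h
    · exact absurd h (pow_ne_zero 2 hxne)
    · exact h
  · -- a0 coefficient
    have h := hIDu 0
    rw [iteratedDeriv_zero] at h
    simp only [Nat.factorial_zero, Nat.cast_one, div_one]
    rw [iteratedDeriv_zero]
    simpa [ha0] using h
  · -- a1 coefficient
    have h := hIDu 1
    simp [h, ha1]
  · -- recurrence
    intro k
    have hfac : ∀ n : ℕ, ((n.factorial : ℝ)) ≠ 0 := fun n =>
      Nat.cast_ne_zero.mpr n.factorial_ne_zero
    rw [hIDu (k+2), hIDu k, hIDup k]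
    rw [mul_div_cancel_left₀ _ (hfac (k+2)), mul_div_cancel_left₀ _ (hfac k),
      mul_div_cancel_left₀ _ (hfac k)]
    rw [ha, aseq_rec, ← ha, ← hcc]
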